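/- For independent standard normal random variables P and Q and D > 2, the probability that sgn(P - Q/√(D-1)) ≠ sgn(Q - P/√(D-1)) equals 1/2 + (2/π)·arctan(1/√(D-1)), and this quantity is at least 1/2 + (2/π)·(1/√D). -/

import Mathlib

open MeasureTheory ProbabilityTheory Real Set

lemma cone_angle {a b r θ : ℝ} (hr : 0 < r) (hθ : θ ∈ Set.Ioo (-π) π) :
    ((0:ℝ) < r * Real.cos θ ∧ a * (r * Real.cos θ) < r * Real.sin θ ∧
      r * Real.sin θ < b * (r * Real.cos θ)) ↔ θ ∈ Set.Ioo (arctan a) (arctan b) := by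
  constructor
  · rintro ⟨h1, h2, h3⟩
    have hc : 0 < Real.cos θ := by nlinarith
    have hlt : θ < π / 2 := by
      by_contra h
      push_neg at h
      have := Real.cos_nonpos_of_pi_div_two_le_of_le h (by nlinarith [hθ.2, Real.pi_pos])
      linarith
    have hgt : -(π / 2) < θ := by
      by_contra h
      push_neg at h
      have h2' : π / 2 ≤ -θ := by linarith
      have := Real.cos_nonpos_of_pi_div_two_le_of_le h2' (by nlinarith [hθ.1, Real.pi_pos])
      rw [Real.cos_neg] at this
      linarith
    have hta : a < Real.tan θ := by
      rw [Real.tan_eq_sin_div_cos, lt_div_iff₀ hc]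
      nlinarith
    have htb : Real.tan θ < b := by
      rw [Real.tan_eq_sin_div_cos, div_lt_iff₀ hc]
      nlinarith
    constructor
    · calc arctan a < arctan (Real.tan θ) := arctan_strictMono hta
        _ = θ := Real.arctan_tan hgt hlt
    · calc θ = arctan (Real.tan θ) := (Real.arctan_tan hgt hlt).symm
        _ < arctan b := arctan_strictMono htb
  · rintro ⟨h1, h2⟩
    have hgt : -(π / 2) < θ := lt_trans (Real.neg_pi_div_two_lt_arctan a) h1
    have hlt : θ < π / 2 := lt_trans h2 (Real.arctan_lt_pi_div_two b)
    have hc : 0 < Real.cos θ := Real.cos_pos_of_mem_Ioo ⟨hgt, hlt⟩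
    have hta : a < Real.tan θ := by
      have := Real.strictMonoOn_tan ⟨Real.neg_pi_div_two_lt_arctan a, Real.arctan_lt_pi_div_two a⟩
        ⟨hgt, hlt⟩ h1
      rwa [Real.tan_arctan] at this
    have htb : Real.tan θ < b := by
      have := Real.strictMonoOn_tan ⟨hgt, hlt⟩
        ⟨Real.neg_pi_div_two_lt_arctan b, Real.arctan_lt_pi_div_two b⟩ h2
      rwa [Real.tan_arctan] at this
    rw [Real.tan_eq_sin_div_cos, lt_div_iff₀ hc] at hta
    rw [Real.tan_eq_sin_div_cos, div_lt_iff₀ hc] at htb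
    exact ⟨mul_pos hr hc, by nlinarith, by nlinarith⟩

noncomputable def gpdf : ℝ × ℝ → ℝ := fun p => gaussianPDFReal 0 1 p.1 * gaussianPDFReal 0 1 p.2

lemma gpdf_polar (r θ : ℝ) :
    gpdf (r * Real.cos θ, r * Real.sin θ) = (2 * π)⁻¹ * Real.exp (-(r ^ 2 / 2)) := by
  simp only [gpdf, gaussianPDFReal]
  have h1 : Real.sqrt (2 * π * (1:NNReal)) * Real.sqrt (2 * π * (1:NNReal)) = 2 * π := by
    rw [NNReal.coe_one, mul_one]
    exact Real.mul_self_sqrt (by positivity)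
  have key : -(r * Real.cos θ - 0) ^ 2 / (2 * (1:NNReal)) +
      -(r * Real.sin θ - 0) ^ 2 / (2 * (1:NNReal)) = -(r ^ 2 / 2) := by
    have hs := Real.sin_sq_add_cos_sq θ
    rw [NNReal.coe_one]
    nlinarith [hs]
  rw [mul_mul_mul_comm, ← mul_inv, h1, ← Real.exp_add, key]
lemma gpdf_nonneg (p : ℝ × ℝ) : 0 ≤ gpdf p :=
  mul_nonneg (gaussianPDFReal_nonneg _ _ _) (gaussianPDFReal_nonneg _ _ _)

lemma gpdf_integrable : Integrable gpdf (volume : Measure (ℝ × ℝ)) := by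
  rw [Measure.volume_eq_prod]
  exact (integrable_gaussianPDFReal 0 1).mul_prod (integrable_gaussianPDFReal 0 1)

lemma prod_gauss : (gaussianReal 0 1).prod (gaussianReal 0 1) =
    (volume : Measure (ℝ × ℝ)).withDensity (fun p => ENNReal.ofReal (gpdf p)) := by
  refine Measure.prod_eq fun s t hs ht => ?_
  have hmes : Measurable fun p : ℝ × ℝ => ENNReal.ofReal (gpdf p) := by
    unfold gpdf
    exact (((measurable_gaussianPDFReal 0 1).comp measurable_fst).mul
      ((measurable_gaussianPDFReal 0 1).comp measurable_snd)).ennreal_ofReal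
  rw [withDensity_apply _ (hs.prod ht), Measure.volume_eq_prod, ← Measure.prod_restrict]
  have : ∀ p : ℝ × ℝ, ENNReal.ofReal (gpdf p) =
      ENNReal.ofReal (gaussianPDFReal 0 1 p.1) * ENNReal.ofReal (gaussianPDFReal 0 1 p.2) :=
    fun p => ENNReal.ofReal_mul (gaussianPDFReal_nonneg _ _ _)
  simp_rw [this]
  rw [lintegral_prod_mul ((measurable_gaussianPDFReal 0 1).ennreal_ofReal.aemeasurable)
    ((measurable_gaussianPDFReal 0 1).ennreal_ofReal.aemeasurable),
    gaussianReal_apply _ one_ne_zero, gaussianReal_apply _ one_ne_zero]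
  rfl

lemma meas_eq_integral {S : Set (ℝ × ℝ)} (hS : MeasurableSet S) :
    ((gaussianReal 0 1).prod (gaussianReal 0 1)) S = ENNReal.ofReal (∫ p in S, gpdf p) := by
  rw [prod_gauss, withDensity_apply _ hS,
    ofReal_integral_eq_lintegral_ofReal (gpdf_integrable.restrict)
      (ae_of_all _ gpdf_nonneg)]

-- radial integral
lemma radial_integral : ∫ r in Ioi (0:ℝ), r * Real.exp (-(r^2/2)) = 1 := by
  have hd : ∀ x ∈ Ioi (0:ℝ), HasDerivAt (fun r => -Real.exp (-(r^2/2)))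
      (x * Real.exp (-(x^2/2))) x := by
    intro x _
    have h1 : HasDerivAt (fun r : ℝ => -(r^2/2)) (-x) x := by
      have := ((hasDerivAt_pow 2 x).div_const 2).neg
      exact this.congr_deriv (by ring)
    have := (h1.exp).neg
    exact this.congr_deriv (by ring)
  have hi : IntegrableOn (fun x : ℝ => x * Real.exp (-(x^2/2))) (Ioi 0) := by
    have := (integrable_mul_exp_neg_mul_sq (b := (1:ℝ)/2) (by norm_num)).integrableOn
      (s := Ioi (0:ℝ))
    refine this.congr_fun (fun x _ => by ring_nf) measurableSet_Ioi
  have ht : Filter.Tendsto (fun r : ℝ => -Real.exp (-(r^2/2))) Filter.atTop (nhds 0) := by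
    rw [← neg_zero]
    refine Filter.Tendsto.neg ?_
    refine Real.tendsto_exp_atBot.comp ?_
    refine Filter.tendsto_neg_atBot_iff.mpr ?_
    exact Filter.Tendsto.atTop_div_const (by norm_num)
      (Filter.tendsto_pow_atTop (by norm_num))
  have := integral_Ioi_of_hasDerivAt_of_tendsto (Continuous.continuousWithinAt (by fun_prop)) hd hi ht
  simpa using this

lemma cone_measurable (a b : ℝ) :
    MeasurableSet {q : ℝ × ℝ | 0 < q.1 ∧ a * q.1 < q.2 ∧ q.2 < b * q.1} := by
  apply MeasurableSet.inter
  · exact measurableSet_lt measurable_const measurable_fst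
  · exact (measurableSet_lt (measurable_fst.const_mul a) measurable_snd).inter
      (measurableSet_lt measurable_snd (measurable_fst.const_mul b))

lemma cone_integral {a b : ℝ} (hab : a ≤ b) :
    ∫ p in {q : ℝ × ℝ | 0 < q.1 ∧ a * q.1 < q.2 ∧ q.2 < b * q.1}, gpdf p
      = (arctan b - arctan a) / (2 * π) := by
  set C := {q : ℝ × ℝ | 0 < q.1 ∧ a * q.1 < q.2 ∧ q.2 < b * q.1} with hCdef
  have hC : MeasurableSet C := cone_measurable a b
  rw [← integral_indicator hC, ← integral_comp_polarCoord_symm (C.indicator gpdf)]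
  have htarget : polarCoord.target = Ioi (0:ℝ) ×ˢ Ioo (-π) π := rfl
  rw [htarget]
  have hcong : ∀ p ∈ Ioi (0:ℝ) ×ˢ Ioo (-π) π,
      p.1 • (C.indicator gpdf) (polarCoord.symm p) =
      (p.1 * Real.exp (-(p.1 ^ 2 / 2))) *
        ((2 * π)⁻¹ * (Ioo (arctan a) (arctan b)).indicator (fun _ => (1:ℝ)) p.2) := by
    rintro ⟨r, θ⟩ ⟨hr, hθ⟩
    have hsymm : polarCoord.symm (r, θ) = (r * Real.cos θ, r * Real.sin θ) := rfl
    have hiff := cone_angle (a := a) (b := b) hr hθ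
    by_cases h : θ ∈ Ioo (arctan a) (arctan b)
    · have hmem : (r * Real.cos θ, r * Real.sin θ) ∈ C := hiff.mpr h
      rw [hsymm, Set.indicator_of_mem hmem, Set.indicator_of_mem h, gpdf_polar]
      simp only [smul_eq_mul]
      ring
    · have hmem : (r * Real.cos θ, r * Real.sin θ) ∉ C := fun hc => h (hiff.mp hc)
      rw [hsymm, Set.indicator_of_notMem hmem, Set.indicator_of_notMem h]
      simp
  rw [setIntegral_congr_fun (measurableSet_Ioi.prod measurableSet_Ioo) hcong,
    Measure.volume_eq_prod, ← Measure.prod_restrict,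
    integral_prod_mul (fun r : ℝ => r * Real.exp (-(r ^ 2 / 2)))
      (fun θ : ℝ => (2 * π)⁻¹ * (Ioo (arctan a) (arctan b)).indicator (fun _ => (1:ℝ)) θ),
    radial_integral, one_mul,
    integral_const_mul, setIntegral_indicator measurableSet_Ioo]
  have hsub : Ioo (-π) π ∩ Ioo (arctan a) (arctan b) = Ioo (arctan a) (arctan b) := by
    apply Set.inter_eq_right.mpr
    apply Set.Ioo_subset_Ioo
    · nlinarith [Real.neg_pi_div_two_lt_arctan a, Real.pi_pos]
    · nlinarith [Real.arctan_lt_pi_div_two b, Real.pi_pos]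
  rw [hsub]
  simp only [setIntegral_const, smul_eq_mul, mul_one, measureReal_def, Real.volume_Ioo]
  rw [ENNReal.toReal_ofReal (sub_nonneg.mpr (Real.arctan_strictMono.monotone hab))]
  ring

lemma cone_measure {a b : ℝ} (hab : a ≤ b) :
    ((gaussianReal 0 1).prod (gaussianReal 0 1))
      {q : ℝ × ℝ | 0 < q.1 ∧ a * q.1 < q.2 ∧ q.2 < b * q.1}
      = ENNReal.ofReal ((arctan b - arctan a) / (2 * π)) := by
  rw [meas_eq_integral (cone_measurable a b), cone_integral hab]

lemma gauss_neg : (gaussianReal 0 1).map (fun x : ℝ => -x) = gaussianReal 0 1 := by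
  have h := gaussianReal_map_const_mul (μ := 0) (v := 1) (-1)
  have hv : (NNReal.mk ((-1:ℝ)^2) (sq_nonneg _) * 1 : NNReal) = 1 := by
    ext; norm_num
  rw [mul_zero, hv] at h
  have hfun : (fun x : ℝ => -x) = ((-1 : ℝ) * ·) := by funext x; ring
  rw [hfun]
  exact h

lemma prodgauss_neg_apply {S : Set (ℝ × ℝ)} (hS : MeasurableSet S) :
    ((gaussianReal 0 1).prod (gaussianReal 0 1)) ((fun p : ℝ × ℝ => (-p.1, -p.2)) ⁻¹' S)
      = ((gaussianReal 0 1).prod (gaussianReal 0 1)) S := by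
  have hmeas : Measurable (fun p : ℝ × ℝ => (-p.1, -p.2)) := by fun_prop
  have hmap : ((gaussianReal 0 1).prod (gaussianReal 0 1)).map (fun p : ℝ × ℝ => (-p.1, -p.2))
      = (gaussianReal 0 1).prod (gaussianReal 0 1) := by
    have := Measure.map_prod_map (gaussianReal 0 1) (gaussianReal 0 1)
      (measurable_neg : Measurable (fun x : ℝ => -x)) (measurable_neg)
    rw [gauss_neg] at this
    exact this.symm
  conv_rhs => rw [← hmap]
  rw [Measure.map_apply hmeas hS]

lemma gauss_singleton_zero :
    ((gaussianReal 0 1).prod (gaussianReal 0 1)) {((0:ℝ), (0:ℝ))} = 0 := by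
  have h : ({((0:ℝ), (0:ℝ))} : Set (ℝ × ℝ)) = {(0:ℝ)} ×ˢ {(0:ℝ)} := by
    ext p; simp [Prod.ext_iff]
  rw [h, Measure.prod_prod]
  have hz : (gaussianReal 0 1) {(0:ℝ)} = 0 := by
    rw [gaussianReal_apply _ one_ne_zero, setLIntegral_measure_zero _ _ Real.volume_singleton]
  rw [hz, zero_mul]

lemma sign_eq_iff (u v : ℝ) : Real.sign u = Real.sign v ↔
    (0 < u ∧ 0 < v) ∨ (u < 0 ∧ v < 0) ∨ (u = 0 ∧ v = 0) := by
  constructor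
  · intro hh
    rcases lt_trichotomy u 0 with h | h | h
    · rw [Real.sign_of_neg h] at hh
      rcases lt_trichotomy v 0 with h' | h' | h'
      · exact Or.inr (Or.inl ⟨h, h'⟩)
      · rw [h', Real.sign_zero] at hh; norm_num at hh
      · rw [Real.sign_of_pos h'] at hh; norm_num at hh
    · rw [h, Real.sign_zero] at hh
      rcases lt_trichotomy v 0 with h' | h' | h'
      · rw [Real.sign_of_neg h'] at hh; norm_num at hh
      · exact Or.inr (Or.inr ⟨h, h'⟩)
      · rw [Real.sign_of_pos h'] at hh; norm_num at hh
    · rw [Real.sign_of_pos h] at hh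
      rcases lt_trichotomy v 0 with h' | h' | h'
      · rw [Real.sign_of_neg h'] at hh; norm_num at hh
      · rw [h', Real.sign_zero] at hh; norm_num at hh
      · exact Or.inl ⟨h, h'⟩
  · rintro (⟨h, h'⟩ | ⟨h, h'⟩ | ⟨h, h'⟩)
    · rw [Real.sign_of_pos h, Real.sign_of_pos h']
    · rw [Real.sign_of_neg h, Real.sign_of_neg h']
    · rw [h, h']

lemma main_prob {c : ℝ} (hc0 : 0 < c) (hc1 : c < 1) :
    (((gaussianReal 0 1).prod (gaussianReal 0 1))
      {p : ℝ × ℝ | Real.sign (p.1 - c * p.2) ≠ Real.sign (p.2 - c * p.1)}).toReal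
      = 1 / 2 + (2 / π) * arctan c := by
  set A : Set (ℝ × ℝ) := {q | 0 < q.1 ∧ c * q.1 < q.2 ∧ q.2 < (1/c) * q.1} with hAdef
  set B : Set (ℝ × ℝ) := (fun p : ℝ × ℝ => (-p.1, -p.2)) ⁻¹' A with hBdef
  set Z : Set (ℝ × ℝ) := {((0:ℝ), (0:ℝ))} with hZdef
  have hc2 : c^2 < 1 := by nlinarith
  have hAiff : ∀ x y : ℝ, (0 < x - c * y ∧ 0 < y - c * x) ↔
      (0 < x ∧ c * x < y ∧ y < (1/c) * x) := by
    intro x y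
    constructor
    · rintro ⟨h1, h2⟩
      have hx : 0 < x := by nlinarith
      refine ⟨hx, by linarith, ?_⟩
      rw [one_div_mul_eq_div, lt_div_iff₀ hc0]
      nlinarith
    · rintro ⟨hx, h1, h2⟩
      rw [one_div_mul_eq_div, lt_div_iff₀ hc0] at h2
      constructor <;> nlinarith
  have hGset : {p : ℝ × ℝ | Real.sign (p.1 - c * p.2) = Real.sign (p.2 - c * p.1)}
      = (A ∪ B) ∪ Z := by
    ext ⟨x, y⟩
    simp only [Set.mem_setOf_eq, Set.mem_union, Set.mem_preimage, Set.mem_singleton_iff,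
      hAdef, hBdef, hZdef]
    rw [sign_eq_iff]
    constructor
    · rintro (⟨h1, h2⟩ | ⟨h1, h2⟩ | ⟨h1, h2⟩)
      · exact Or.inl (Or.inl ((hAiff x y).mp ⟨by linarith, by linarith⟩))
      · exact Or.inl (Or.inr ((hAiff (-x) (-y)).mp ⟨by nlinarith, by nlinarith⟩))
      · refine Or.inr ?_
        have h3 : x * (1 - c^2) = 0 := by linear_combination h1 + c * h2
        have hx : x = 0 := by
          rcases mul_eq_zero.mp h3 with h | h
          · exact h
          · nlinarith
        have hy : y = 0 := by nlinarith
        simp [Prod.ext_iff, hx, hy]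
    · rintro ((h | h) | h)
      · obtain ⟨h1, h2⟩ := (hAiff x y).mpr h
        exact Or.inl ⟨by linarith, by linarith⟩
      · obtain ⟨h1, h2⟩ := (hAiff (-x) (-y)).mpr h
        exact Or.inr (Or.inl ⟨by nlinarith, by nlinarith⟩)
      · rw [Prod.ext_iff] at h
        obtain ⟨hx, hy⟩ := h
        simp only at hx hy
        exact Or.inr (Or.inr ⟨by rw [hx, hy]; ring, by rw [hx, hy]; ring⟩)
  have hA : MeasurableSet A := cone_measurable c (1/c)
  have hmeasneg : Measurable (fun p : ℝ × ℝ => (-p.1, -p.2)) := by fun_prop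
  have hB : MeasurableSet B := hmeasneg hA
  have hZ : MeasurableSet Z := measurableSet_singleton _
  have hG : MeasurableSet ((A ∪ B) ∪ Z) := (hA.union hB).union hZ
  have hevent : {p : ℝ × ℝ | Real.sign (p.1 - c * p.2) ≠ Real.sign (p.2 - c * p.1)}
      = ((A ∪ B) ∪ Z)ᶜ := by
    rw [← hGset]; rfl
  set t : ℝ := (arctan (1/c) - arctan c) / (2 * π) with htdef
  have hab : c ≤ 1/c := by
    rw [le_div_iff₀ hc0]; nlinarith
  have ht0 : 0 ≤ t := by
    apply div_nonneg _ (by positivity)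
    simp only [sub_nonneg]
    exact Real.arctan_strictMono.monotone hab
  have hmA : ((gaussianReal 0 1).prod (gaussianReal 0 1)) A = ENNReal.ofReal t :=
    cone_measure hab
  have hmB : ((gaussianReal 0 1).prod (gaussianReal 0 1)) B = ENNReal.ofReal t := by
    rw [hBdef, prodgauss_neg_apply hA, hmA]
  have hdisj : Disjoint A B := by
    rw [Set.disjoint_left]
    rintro ⟨x, y⟩ hxA hxB
    have h1 : 0 < x := hxA.1
    have h2 : 0 < -x := hxB.1
    linarith
  have hmG : ((gaussianReal 0 1).prod (gaussianReal 0 1)) ((A ∪ B) ∪ Z)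
      = ENNReal.ofReal (2 * t) := by
    have hdisjZ : Disjoint (A ∪ B) Z := by
      rw [Set.disjoint_right]
      rintro p hp
      rw [hZdef, Set.mem_singleton_iff] at hp
      subst hp
      rintro (h | h)
      · exact lt_irrefl 0 h.1
      · simpa using h.1
    rw [measure_union hdisjZ hZ, gauss_singleton_zero, add_zero, measure_union hdisj hB,
      hmA, hmB, ← ENNReal.ofReal_add ht0 ht0]
    ring_nf
  have h2t : 2 * t ≤ 1 := by
    have hnum : arctan (1/c) - arctan c ≤ π / 2 := by
      have := Real.arctan_lt_pi_div_two (1/c)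
      have h0 : (0:ℝ) ≤ arctan c := by
        rw [← Real.arctan_zero]
        exact Real.arctan_strictMono.monotone hc0.le
      linarith
    have hmul : t * (2 * π) = arctan (1/c) - arctan c := div_mul_cancel₀ _ (by positivity)
    nlinarith [Real.pi_pos]
  rw [hevent, measure_compl hG (measure_ne_top _ _), measure_univ, hmG,
    ← ENNReal.ofReal_one, ← ENNReal.ofReal_sub _ (by linarith : (0:ℝ) ≤ 2 * t),
    ENNReal.toReal_ofReal (by linarith)]
  rw [htdef, one_div c, Real.arctan_inv_of_pos hc0]
  have hπ : π ≠ 0 := Real.pi_ne_zero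
  field_simp
  ring

theorem sign_prob_ne {Ω : Type*} [MeasurableSpace Ω] (μ : Measure Ω) [IsProbabilityMeasure μ]
    (P Q : Ω → ℝ) (hPm : Measurable P) (hQm : Measurable Q)
    (hP : μ.map P = gaussianReal 0 1) (hQ : μ.map Q = gaussianReal 0 1)
    (hind : IndepFun P Q μ) (D : ℝ) (hD : 2 < D) :
    (μ {ω | Real.sign (P ω - Q ω / Real.sqrt (D - 1)) ≠
        Real.sign (Q ω - P ω / Real.sqrt (D - 1))}).toReal =
      1 / 2 + (2 / π) * Real.arctan (1 / Real.sqrt (D - 1)) ∧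
    1 / 2 + (2 / π) * (1 / Real.sqrt D) ≤
      1 / 2 + (2 / π) * Real.arctan (1 / Real.sqrt (D - 1)) := by
  have hD1 : (1:ℝ) < D - 1 := by linarith
  set s : ℝ := Real.sqrt (D - 1) with hsdef
  have hs1 : 1 < s := by
    have h2 : s ^ 2 = D - 1 := by
      rw [hsdef]; exact Real.sq_sqrt (by linarith)
    have h3 : (0:ℝ) ≤ s := by rw [hsdef]; exact Real.sqrt_nonneg _
    nlinarith
  have hs0 : 0 < s := by linarith
  set c : ℝ := 1 / s with hcdef
  have hc0 : 0 < c := by positivity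
  have hc1 : c < 1 := by rw [hcdef, div_lt_one hs0]; linarith
  have hdiv : ∀ x : ℝ, x / s = c * x := fun x => by
    rw [hcdef, one_div_mul_eq_div]
  have hsign : Measurable Real.sign := by
    have h : Real.sign = fun r : ℝ => if r < 0 then (-1:ℝ) else if 0 < r then 1 else 0 := by
      funext r; rw [Real.sign]
    rw [h]
    exact Measurable.ite (measurableSet_lt measurable_id measurable_const) measurable_const
      (Measurable.ite (measurableSet_lt measurable_const measurable_id) measurable_const
        measurable_const)
  have hSm : MeasurableSet
      {p : ℝ × ℝ | Real.sign (p.1 - c * p.2) ≠ Real.sign (p.2 - c * p.1)} := by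
    have h1 : Measurable fun p : ℝ × ℝ => Real.sign (p.1 - c * p.2) :=
      hsign.comp (by fun_prop)
    have h2 : Measurable fun p : ℝ × ℝ => Real.sign (p.2 - c * p.1) :=
      hsign.comp (by fun_prop)
    exact (measurableSet_eq_fun h1 h2).compl
  have hpair : μ.map (fun ω => (P ω, Q ω)) = (gaussianReal 0 1).prod (gaussianReal 0 1) := by
    rw [(indepFun_iff_map_prod_eq_prod_map_map hPm.aemeasurable hQm.aemeasurable).mp hind,
      hP, hQ]
  have hev : {ω | Real.sign (P ω - Q ω / s) ≠ Real.sign (Q ω - P ω / s)}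
      = (fun ω => (P ω, Q ω)) ⁻¹'
        {p : ℝ × ℝ | Real.sign (p.1 - c * p.2) ≠ Real.sign (p.2 - c * p.1)} := by
    ext ω
    simp only [Set.mem_setOf_eq, Set.mem_preimage, hdiv]
  have hmain : (μ {ω | Real.sign (P ω - Q ω / s) ≠ Real.sign (Q ω - P ω / s)}).toReal
      = 1 / 2 + (2 / π) * arctan c := by
    rw [hev, ← Measure.map_apply (hPm.prodMk hQm) hSm, hpair]
    exact main_prob hc0 hc1
  have hkey : 1 / Real.sqrt D ≤ arctan c := by
    have hs2 : s ^ 2 = D - 1 := Real.sq_sqrt (by linarith)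
    have h1 : 1 + c ^ 2 = D / s ^ 2 := by
      rw [hcdef]
      field_simp
      linarith
    have hsq : Real.sqrt (1 + c ^ 2) = Real.sqrt D / s := by
      rw [h1, Real.sqrt_div (by linarith : (0:ℝ) ≤ D), Real.sqrt_sq hs0.le]
    have hsD : 0 < Real.sqrt D := Real.sqrt_pos.mpr (by linarith)
    have hval : c / Real.sqrt (1 + c ^ 2) = 1 / Real.sqrt D := by
      rw [hsq, hcdef]
      field_simp
    calc 1 / Real.sqrt D = Real.sin (arctan c) := by rw [Real.sin_arctan, hval]
      _ ≤ arctan c := by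
        apply Real.sin_le
        rw [← Real.arctan_zero]
        exact Real.arctan_strictMono.monotone hc0.le
  refine ⟨hmain, ?_⟩
  have hπ : 0 < π := Real.pi_pos
  have : (2 / π) * (1 / Real.sqrt D) ≤ (2 / π) * arctan c :=
    mul_le_mul_of_nonneg_left hkey (by positivity)
  linarith
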